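/- arXiv:math/0602456 — 2 statements merged into one kernel-verified Lean document; each statement's English description precedes it below -/
import Mathlib

section
/- Every normalized fully ternary string s of length n has flip sorting distance d_s(s) ≥ n − 3. -/
/-- Prefix reversal (flip) of the first `i` symbols of `s`. -/
def pflip (i : ℕ) (s : List ℕ) : List ℕ := (s.take i).reverse ++ s.drop i

/-- One flip step: `t` is obtained from `s` by some flip `f^(i)` with `1 ≤ i ≤ |s|`. -/
def FlipStep (s t : List ℕ) : Prop := ∃ i, 1 ≤ i ∧ i ≤ s.length ∧ t = pflip i s

/-- `ReachIn m s t`: `t` can be obtained from `s` by exactly `m` flips. -/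
def ReachIn : ℕ → List ℕ → List ℕ → Prop
  | 0 => fun s t => s = t
  | (m+1) => fun s t => ∃ u, FlipStep s u ∧ ReachIn m u t

/-- Flip distance: minimum number of flips transforming `s` into `t`. -/
noncomputable def flipDist (s t : List ℕ) : ℕ := sInf {m | ReachIn m s t}

/-- Two strings are compatible if every symbol occurs equally often in both. -/
def Compatible (s t : List ℕ) : Prop := ∀ a, s.count a = t.count a

/-- A string is fully `k`-ary if the set of symbols occurring in it is exactly `{0,…,k-1}`. -/
def FullyKary (k : ℕ) (s : List ℕ) : Prop := ∀ a, a ∈ s ↔ a < k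

/-- A string is normalized if no two adjacent symbols are equal. -/
def Normalized (s : List ℕ) : Prop := s.Chain' (· ≠ ·)

/-- A string is grouped if the occurrences of each symbol are consecutive. -/
def Grouped (s : List ℕ) : Prop :=
  ∀ i j l : Fin s.length, i < j → j < l → s.get i = s.get l → s.get j = s.get i

/-- Flip grouping distance: minimum number of flips transforming `s` into some grouped string. -/
noncomputable def groupDist (s : List ℕ) : ℕ := sInf {m | ∃ t, Grouped t ∧ ReachIn m s t}

/-- Flip sorting distance: flip distance from `s` to its non-descending rearrangement `I(s)`. -/
noncomputable def sortDist (s : List ℕ) : ℕ := flipDist s (s.insertionSort (· ≤ ·))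

/-- `rep w m` is the concatenation of `m` copies of the string `w`. -/
def rep (w : List ℕ) (m : ℕ) : List ℕ := (List.replicate m w).flatten

-- breakpoint count
def B : List ℕ → ℕ
  | [] => 0
  | [_] => 0
  | a :: b :: l => (if a = b then 0 else 1) + B (b :: l)

def J (x? : Option ℕ) (a : ℕ) : ℕ := match x? with
  | none => 0
  | some b => if a = b then 0 else 1

lemma B_cons (a : ℕ) (l : List ℕ) : B (a :: l) = J l.head? a + B l := by
  cases l <;> simp [B, J]

lemma B_concat (l : List ℕ) (a : ℕ) : B (l ++ [a]) = J l.getLast? a + B l := by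
  induction l with
  | nil => simp [B, J]
  | cons b l ih =>
    cases l with
    | nil => simp [B, J, eq_comm]
    | cons c l =>
      show B (b :: (c :: l ++ [a])) = _
      rw [show B (b :: (c :: l ++ [a])) = (if b = c then 0 else 1) + B (c :: l ++ [a]) from rfl,
        ih, List.getLast?_cons_cons,
        show B (b :: c :: l) = (if b = c then 0 else 1) + B (c :: l) from rfl]
      omega

lemma B_reverse (l : List ℕ) : B l.reverse = B l := by
  induction l with
  | nil => rfl
  | cons a l ih =>
    rw [List.reverse_cons, B_concat, ih, B_cons, List.getLast?_reverse]

lemma le_B_append (u v : List ℕ) : B u + B v ≤ B (u ++ v) := by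
  induction u with
  | nil => simp [B]
  | cons a u ih =>
    cases u with
    | nil =>
      cases v with
      | nil => simp [B]
      | cons b v => simp [B]
    | cons b u =>
      show _ ≤ B (a :: (b :: u ++ v))
      rw [show B (a :: (b :: u ++ v)) = (if a = b then 0 else 1) + B (b :: u ++ v) from rfl,
        show B (a :: b :: u) = (if a = b then 0 else 1) + B (b :: u) from rfl]
      omega

lemma B_append_le (u v : List ℕ) : B (u ++ v) ≤ B u + B v + 1 := by
  induction u with
  | nil => simp [B]
  | cons a u ih =>
    cases u with
    | nil =>
      cases v with
      | nil => simp [B]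
      | cons b v =>
        show B (a :: b :: v) ≤ _
        rw [show B (a :: b :: v) = (if a = b then 0 else 1) + B (b :: v) from rfl,
          show B [a] = 0 from rfl]
        split <;> omega
    | cons b u =>
      show B (a :: (b :: u ++ v)) ≤ _
      rw [show B (a :: (b :: u ++ v)) = (if a = b then 0 else 1) + B (b :: u ++ v) from rfl,
        show B (a :: b :: u) = (if a = b then 0 else 1) + B (b :: u) from rfl]
      omega

lemma B_flip_le (i : ℕ) (s : List ℕ) : B s ≤ B (pflip i s) + 1 := by
  have h1 : B s ≤ B (s.take i) + B (s.drop i) + 1 := by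
    conv_lhs => rw [← List.take_append_drop i s]
    exact B_append_le _ _
  have h2 : B (s.take i) + B (s.drop i) ≤ B (pflip i s) := by
    rw [← B_reverse (s.take i)]; exact le_B_append _ _
  omega

lemma B_reach_le {m : ℕ} {s t : List ℕ} (h : ReachIn m s t) : B s ≤ B t + m := by
  induction m generalizing s with
  | zero => cases h; omega
  | succ m ih =>
    obtain ⟨u, ⟨i, _, _, rfl⟩, hr⟩ := h
    have := B_flip_le i s
    have := ih hr
    omega

lemma ReachIn_trans {m k : ℕ} {s u t : List ℕ} (h1 : ReachIn m s u) (h2 : ReachIn k u t) :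
    ReachIn (m + k) s t := by
  induction m generalizing s with
  | zero => cases h1; simpa using h2
  | succ m ih =>
    obtain ⟨w, hs, hr⟩ := h1
    rw [show m + 1 + k = (m + k) + 1 by omega]
    exact ⟨w, hs, ih hr⟩

lemma FlipStep_append {u u' : List ℕ} (v : List ℕ) (h : FlipStep u u') :
    FlipStep (u ++ v) (u' ++ v) := by
  obtain ⟨i, h1, h2, rfl⟩ := h
  refine ⟨i, h1, by simp; omega, ?_⟩
  simp [pflip, List.take_append_of_le_length h2, List.drop_append_of_le_length h2]

lemma ReachIn_append {m : ℕ} {u u' : List ℕ} (v : List ℕ) (h : ReachIn m u u') :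
    ReachIn m (u ++ v) (u' ++ v) := by
  induction m generalizing u with
  | zero => cases h; rfl
  | succ m ih =>
    obtain ⟨w, hs, hr⟩ := h
    exact ⟨w ++ v, FlipStep_append v hs, ih hr⟩

lemma pflip_left (u v : List ℕ) : pflip u.length (u ++ v) = u.reverse ++ v := by
  simp [pflip]

lemma pflip_all (l : List ℕ) : pflip l.length l = l.reverse := by
  simp [pflip]

lemma reach_of_perm : ∀ (t s : List ℕ), s.Perm t → ∃ m, ReachIn m s t := by
  intro t
  induction t using List.reverseRecOn with
  | nil => intro s h; exact ⟨0, h.eq_nil⟩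
  | append_singleton t' a ih =>
    intro s h
    have ha : a ∈ s := h.mem_iff.mpr (by simp)
    obtain ⟨p, q, rfl⟩ := List.append_of_mem ha
    have e1 : pflip (p ++ [a]).length ((p ++ [a]) ++ q) = a :: (p.reverse ++ q) := by
      rw [pflip_left]; simp
    have e2 : pflip (a :: (p.reverse ++ q)).length (a :: (p.reverse ++ q))
        = (q.reverse ++ p) ++ [a] := by
      rw [pflip_all]; simp
    have h1 : (a :: (p ++ q)).Perm (a :: t') :=
      (List.perm_middle.symm.trans h).trans (List.perm_append_singleton a t')
    have hperm : (q.reverse ++ p).Perm t' :=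
      ((q.reverse_perm.append_right p).trans List.perm_append_comm).trans h1.cons_inv
    obtain ⟨m, hm⟩ := ih _ hperm
    refine ⟨2 + m, ?_⟩
    have r2 : ReachIn 2 (p ++ a :: q) ((q.reverse ++ p) ++ [a]) := by
      refine ⟨a :: (p.reverse ++ q), ⟨(p ++ [a]).length, by simp, by simp, ?_⟩,
        (q.reverse ++ p) ++ [a], ⟨(a :: (p.reverse ++ q)).length, by simp, le_refl _, e2.symm⟩,
        rfl⟩
      rw [← e1]; simp
    exact ReachIn_trans r2 (ReachIn_append [a] hm)

lemma B_normalized {s : List ℕ} (h : s.Chain' (· ≠ ·)) : B s = s.length - 1 := by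
  induction s with
  | nil => rfl
  | cons a l ih =>
    rw [B_cons, ih h.tail]
    cases l with
    | nil => simp [J]
    | cons b l =>
      have hab : a ≠ b := List.isChain_cons_cons.mp h |>.1
      simp [J, hab]; omega

lemma B_sorted_le : ∀ (l : List ℕ), l.Chain' (· ≤ ·) → (∀ x ∈ l, x ≤ 2) → B l ≤ 2 := by
  have key : ∀ (l : List ℕ) (a : ℕ), (a :: l).Chain' (· ≤ ·) →
      B (a :: l) + a ≤ (a :: l).getLast (by simp) := by
    intro l
    induction l with
    | nil => intro a _; simp [B]
    | cons b l ih =>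
      intro a h
      have hab : a ≤ b := List.isChain_cons_cons.mp h |>.1
      have := ih b (List.isChain_cons_cons.mp h |>.2)
      rw [show B (a :: b :: l) = (if a = b then 0 else 1) + B (b :: l) from rfl]
      rw [List.getLast_cons (by simp)]
      by_cases hab' : a = b
      · simp [hab']; omega
      · have : a < b := lt_of_le_of_ne hab hab'
        simp only [if_neg hab']
        omega
  intro l hl hle
  cases l with
  | nil => simp [B]
  | cons a l =>
    have h1 := key l a hl
    have h2 : (a :: l).getLast (by simp) ≤ 2 := hle _ (List.getLast_mem _)
    omega


theorem sorting_ternary_lower_bound (n : ℕ) (s : List ℕ)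
    (hlen : s.length = n) (hfull : FullyKary 3 s) (hnorm : Normalized s) :
    n - 3 ≤ sortDist s := by
  set t := s.insertionSort (· ≤ ·) with ht
  have hperm : s.Perm t := (List.perm_insertionSort _ s).symm
  have hne : {m | ReachIn m s t}.Nonempty := by
    obtain ⟨m, hm⟩ := reach_of_perm t s hperm
    exact ⟨m, hm⟩
  have hmem : ReachIn (sortDist s) s t := Nat.sInf_mem hne
  have hBs : B s = n - 1 := by rw [B_normalized hnorm, hlen]
  have hBt : B t ≤ 2 := by
    apply B_sorted_le
    · exact (List.pairwise_insertionSort _ s).isChain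
    · intro x hx
      have : x ∈ s := hperm.mem_iff.mpr hx
      have := (hfull x).mp this
      omega
  have := B_reach_le hmem
  omega
end

section
/- For every normalized fully ternary string s whose last symbol is 0 or 1, the flip sorting distance of s equals the flip sorting distance of the string s2 obtained by appending the symbol 2 to the end of s: d_s(s2) = d_s(s). -/
lemma length_pflip (i : ℕ) (s : List ℕ) : (pflip i s).length = s.length := by
  simp [pflip]; omega

lemma gelem_congr (s : List ℕ) {a b : ℕ} (h : a = b) (ha : a < s.length) :
    s[a] = s[b]'(h ▸ ha) := by subst h; rfl

lemma getElem_pflip (i : ℕ) (s : List ℕ) (hi : i ≤ s.length) (j : ℕ)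
    (h : j < (pflip i s).length) :
    (pflip i s)[j] = if h' : j < i then s[i-1-j]'(by rw [length_pflip] at h; omega)
      else s[j]'(by rw [length_pflip] at h; exact h) := by
  have hj : j < s.length := by rw [length_pflip] at h; exact h
  unfold pflip
  rw [List.getElem_append (l₁ := (List.take i s).reverse) (l₂ := List.drop i s) h]
  by_cases h' : j < i
  · rw [dif_pos (by simp; omega), dif_pos h', List.getElem_reverse, List.getElem_take]
    apply gelem_congr
    simp; omega
  · rw [dif_neg (by simp; omega), dif_neg h', List.getElem_drop]
    apply gelem_congr
    simp; omega

lemma pflip_zero (s : List ℕ) : pflip 0 s = s := by simp [pflip]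

lemma pflip_eraseIdx (i p : ℕ) (s : List ℕ) (hi : i ≤ s.length) (hp : p < s.length) :
    (pflip i s).eraseIdx (if p < i then i - 1 - p else p) =
      pflip (if p < i then i - 1 else i) (s.eraseIdx p) := by
  have hplen : (if p < i then i - 1 - p else p) < (pflip i s).length := by
    rw [length_pflip]; split <;> omega
  have hlen₁ : ((pflip i s).eraseIdx (if p < i then i - 1 - p else p)).length = s.length - 1 := by
    rw [List.length_eraseIdx, if_pos hplen, length_pflip]
  have hilen : (if p < i then i - 1 else i) ≤ (s.eraseIdx p).length := by
    rw [List.length_eraseIdx, if_pos hp]; split <;> omega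
  have hlen₂ : (pflip (if p < i then i - 1 else i) (s.eraseIdx p)).length = s.length - 1 := by
    rw [length_pflip, List.length_eraseIdx, if_pos hp]
  apply List.ext_getElem (by rw [hlen₁, hlen₂])
  intro j hj₁ hj₂
  have hj : j < s.length - 1 := by rw [hlen₁] at hj₁; exact hj₁
  by_cases hpi : p < i <;>
    simp only [hpi, if_true, if_false, reduceIte] <;>
    simp only [hpi, if_true, if_false, reduceIte] at hilen hlen₂ <;>
    simp only [List.getElem_eraseIdx, getElem_pflip i s hi, getElem_pflip _ _ hilen]
  all_goals repeat' split
  all_goals try (apply gelem_congr; omega)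
  all_goals try (exfalso; omega)
  all_goals rw [dif_neg (by omega)]
  all_goals try rw [dif_neg (by omega)]

lemma getElem_pflip_val (i p : ℕ) (s : List ℕ) (hi : i ≤ s.length) (hp : p < s.length) :
    (pflip i s)[if p < i then i - 1 - p else p]'(by rw [length_pflip]; split <;> omega) =
      s[p] := by
  by_cases h : p < i
  · simp only [if_pos h]
    rw [getElem_pflip _ _ hi, dif_pos (by omega)]
    apply gelem_congr; omega
  · simp only [if_neg h]
    rw [getElem_pflip _ _ hi, dif_neg h]

lemma erase_reach : ∀ (m : ℕ) (u v : List ℕ) (p : ℕ) (hp : p < u.length),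
    ReachIn m u v →
    ∃ q, ∃ hq : q < v.length, v[q] = u[p] ∧
      ∃ m' ≤ m, ReachIn m' (u.eraseIdx p) (v.eraseIdx q) := by
  intro m
  induction m with
  | zero =>
    intro u v p hp h
    obtain rfl : u = v := h
    exact ⟨p, hp, rfl, 0, le_refl 0, rfl⟩
  | succ m ih =>
    rintro u v p hp ⟨w, ⟨i, hi1, hi2, rfl⟩, hw⟩
    have hp' : (if p < i then i - 1 - p else p) < (pflip i u).length := by
      rw [length_pflip]; split <;> omega
    obtain ⟨q, hq, hval, m', hm', hr⟩ := ih (pflip i u) v _ hp' hw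
    refine ⟨q, hq, ?_, ?_⟩
    · rw [hval, getElem_pflip_val i p u hi2 hp]
    · rw [pflip_eraseIdx i p u hi2 hp] at hr
      by_cases hid : p < i ∧ i = 1
      · refine ⟨m', by omega, ?_⟩
        rw [if_pos hid.1, hid.2] at hr
        simpa [pflip_zero] using hr
      · refine ⟨m' + 1, by omega, ⟨_, ⟨if p < i then i - 1 else i, ?_, ?_, rfl⟩, hr⟩⟩
        · split <;> omega
        · rw [List.length_eraseIdx, if_pos hp]; split <;> omega

lemma pflip_one (s : List ℕ) (hs : 1 ≤ s.length) : pflip 1 s = s := by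
  cases s with
  | nil => simp at hs
  | cons a l => simp [pflip]

lemma reach_length (m : ℕ) (s t : List ℕ) (h : ReachIn m s t) : t.length = s.length := by
  induction m generalizing s with
  | zero => obtain rfl : s = t := h; rfl
  | succ m ih =>
    obtain ⟨u, ⟨i, _, _, rfl⟩, hu⟩ := h
    rw [ih _ hu, length_pflip]

lemma reach_pad (k m : ℕ) (s t : List ℕ) (hs : 1 ≤ s.length) (h : ReachIn m s t) :
    ReachIn (k + m) s t := by
  induction k with
  | zero => simpa using h
  | succ k ih =>
    have hk : k + 1 + m = (k + m) + 1 := by omega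
    rw [hk]
    exact ⟨s, ⟨1, le_refl 1, hs, (pflip_one s hs).symm⟩, ih⟩

lemma pflip_append (i : ℕ) (s : List ℕ) (x : ℕ) (hi : i ≤ s.length) :
    pflip i (s ++ [x]) = pflip i s ++ [x] := by
  unfold pflip
  rw [List.take_append_of_le_length hi, List.drop_append_of_le_length hi, List.append_assoc]

lemma reach_append (m : ℕ) (s t : List ℕ) (x : ℕ) (h : ReachIn m s t) :
    ReachIn m (s ++ [x]) (t ++ [x]) := by
  induction m generalizing s with
  | zero => obtain rfl : s = t := h; rfl
  | succ m ih =>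
    obtain ⟨u, ⟨i, hi1, hi2, rfl⟩, hu⟩ := h
    exact ⟨pflip i s ++ [x], ⟨i, hi1, by simp; omega, (pflip_append i s x hi2).symm⟩, ih _ hu⟩

lemma sort_append_two (s : List ℕ) (h2 : ∀ a ∈ s, a ≤ 2) :
    (s ++ [2]).insertionSort (· ≤ ·) = s.insertionSort (· ≤ ·) ++ [2] := by
  refine (fun hp h1 h2 => List.Perm.eq_of_pairwise' (r := (· ≤ ·)) h1 h2 hp) ?_ ?_ ?_
  · exact (List.perm_insertionSort _ (s ++ [2])).trans
      (((List.perm_insertionSort (· ≤ ·) s).symm).append (List.Perm.refl [2]))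
  · exact List.pairwise_insertionSort _ _
  · rw [List.pairwise_append]
    refine ⟨List.pairwise_insertionSort _ s, List.pairwise_singleton _ _, fun a ha b hb => ?_⟩
    simp only [List.mem_singleton] at hb
    subst hb
    exact h2 a ((List.mem_insertionSort _).1 ha)

lemma erase_sorted (t : List ℕ) (ht : List.Pairwise (· ≤ ·) (t ++ [2])) (h2 : ∀ a ∈ t, a ≤ 2)
    (q : ℕ) (hq : q < (t ++ [2]).length) (hval : (t ++ [2])[q] = 2) :
    (t ++ [2]).eraseIdx q = t := by
  have hlen : (t ++ [2]).length = t.length + 1 := by simp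
  have hmono : ∀ j (hj : j < (t ++ [2]).length), q ≤ j → (t ++ [2])[j] = 2 := by
    intro j hj hqj
    rcases eq_or_lt_of_le hqj with rfl | hlt
    · exact hval
    · have h1 : (t ++ [2])[q] ≤ (t ++ [2])[j] := List.pairwise_iff_getElem.1 ht q j hq hj hlt
      have hm : (t ++ [2])[j] ∈ t ++ [2] := List.getElem_mem _
      rcases List.mem_append.1 hm with h | h
      · have := h2 _ h; omega
      · simp only [List.mem_singleton] at h; omega
  apply List.ext_getElem (by rw [List.length_eraseIdx, if_pos hq, hlen]; omega)
  intro j hj1 hj2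
  rw [List.getElem_eraseIdx]
  split
  · rw [List.getElem_append, dif_pos hj2]
  · have e1 : (t ++ [2])[j+1]'(by simp; omega) = 2 := hmono (j+1) (by simp; omega) (by omega)
    have e2 : t[j] = 2 := by
      have e3 : (t ++ [2])[j]'(by simp; omega) = 2 := hmono j (by simp; omega) (by omega)
      rw [List.getElem_append, dif_pos hj2] at e3
      exact e3
    exact e1.trans e2.symm

theorem sorting_append_two (s : List ℕ)
    (hfull : FullyKary 3 s) (hnorm : Normalized s)
    (hlast : s.getLast? = some 0 ∨ s.getLast? = some 1) :
    sortDist (s ++ [2]) = sortDist s := by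
  have h2 : ∀ a ∈ s, a ≤ 2 := fun a ha => by have := (hfull a).1 ha; omega
  have hs0 : (0:ℕ) ∈ s := (hfull 0).2 (by norm_num)
  have hslen : 1 ≤ s.length := List.length_pos_iff.2 (fun h => by subst h; simp at hs0)
  have hsort := sort_append_two s h2
  have hsorted2 : List.Pairwise (· ≤ ·) (s.insertionSort (· ≤ ·) ++ [2]) :=
    hsort ▸ List.pairwise_insertionSort _ (s ++ [2])
  have h2sort : ∀ a ∈ s.insertionSort (· ≤ ·), a ≤ 2 :=
    fun a ha => h2 a ((List.mem_insertionSort _).1 ha)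
  unfold sortDist flipDist
  rw [hsort]
  congr 1
  ext m
  simp only [Set.mem_setOf_eq]
  constructor
  · intro h
    have hp : s.length < (s ++ [2]).length := by simp
    obtain ⟨q, hq, hval, m', hm', hr⟩ := erase_reach m (s ++ [2]) _ s.length hp h
    have hlast2 : (s ++ [2])[s.length]'hp = 2 := by
      rw [List.getElem_append, dif_neg (lt_irrefl _)]
      simp
    have he1 : (s ++ [2]).eraseIdx s.length = s := by
      rw [List.eraseIdx_eq_take_drop_succ]
      simp
    rw [he1] at hr
    have he2 : (s.insertionSort (· ≤ ·) ++ [2]).eraseIdx q = s.insertionSort (· ≤ ·) :=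
      erase_sorted _ hsorted2 h2sort q hq (hval.trans hlast2)
    rw [he2] at hr
    have hm : m = (m - m') + m' := by omega
    rw [hm]
    exact reach_pad _ _ _ _ hslen hr
  · intro h
    exact reach_append m s _ 2 h
end
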